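/- Let P be a polymatroid defined by submodular f, ρ ∈ P, and d ≥ 0. Then the set P_{ρ,d} = {x ≥ 0 : ρ + x ∈ P, x ≤ d} is a polymatroid defined by the submodular function f̂(S) = min over T ⊆ S of (f(T) − ρ(T) + d(S\T)). -/
import Mathlib


/-- `fhat f ρ d S = min_{T ⊆ S} (f T − ρ(T) + d(S \ T))`. -/
noncomputable def fhat (n : ℕ) (f : Finset (Fin n) → ℝ) (ρ d : Fin n → ℝ)
    (S : Finset (Fin n)) : ℝ :=
  S.powerset.inf' ⟨∅, Finset.empty_mem_powerset S⟩
    (fun T => f T - ∑ i ∈ T, ρ i + ∑ i ∈ S \ T, d i)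

lemma dsum_aux (n : ℕ) (d : Fin n → ℝ) (hd : ∀ i, 0 ≤ d i)
    (S T A B : Finset (Fin n)) :
    ∑ i ∈ (S ∪ T) \ (A ∪ B), d i + ∑ i ∈ (S ∩ T) \ (A ∩ B), d i ≤
      ∑ i ∈ S \ A, d i + ∑ i ∈ T \ B, d i := by
  have key : ∀ X : Finset (Fin n),
      ∑ i ∈ X, d i = ∑ i : Fin n, (if i ∈ X then d i else 0) := by
    intro X
    rw [Finset.sum_ite_mem, Finset.univ_inter]
  rw [key ((S ∪ T) \ (A ∪ B)), key ((S ∩ T) \ (A ∩ B)), key (S \ A), key (T \ B),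
    ← Finset.sum_add_distrib, ← Finset.sum_add_distrib]
  apply Finset.sum_le_sum
  intro i _
  simp only [Finset.mem_sdiff, Finset.mem_union, Finset.mem_inter]
  split_ifs <;> simp_all

theorem remnant_supply_polymatroid (n : ℕ) (f : Finset (Fin n) → ℝ)
    (hmono : ∀ S T : Finset (Fin n), S ⊆ T → f S ≤ f T)
    (hsub : ∀ S T : Finset (Fin n), f (S ∪ T) + f (S ∩ T) ≤ f S + f T)
    (hf0 : f ∅ = 0)
    (ρ : Fin n → ℝ) (hρ0 : ∀ i, 0 ≤ ρ i)
    (hρP : ∀ S : Finset (Fin n), ∑ i ∈ S, ρ i ≤ f S)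
    (d : Fin n → ℝ) (hd : ∀ i, 0 ≤ d i) :
    (∀ S T : Finset (Fin n),
        fhat n f ρ d (S ∪ T) + fhat n f ρ d (S ∩ T) ≤ fhat n f ρ d S + fhat n f ρ d T) ∧
    {x : Fin n → ℝ | (∀ i, 0 ≤ x i) ∧ (∀ i, x i ≤ d i) ∧
        ∀ S : Finset (Fin n), ∑ i ∈ S, (ρ i + x i) ≤ f S}
      = {x : Fin n → ℝ | (∀ i, 0 ≤ x i) ∧
        ∀ S : Finset (Fin n), ∑ i ∈ S, x i ≤ fhat n f ρ d S} := by
  constructor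
  · intro S T
    obtain ⟨A, hA, hAe⟩ := Finset.exists_mem_eq_inf' (⟨∅, Finset.empty_mem_powerset S⟩ :
      S.powerset.Nonempty) (fun T' => f T' - ∑ i ∈ T', ρ i + ∑ i ∈ S \ T', d i)
    obtain ⟨B, hB, hBe⟩ := Finset.exists_mem_eq_inf' (⟨∅, Finset.empty_mem_powerset T⟩ :
      T.powerset.Nonempty) (fun T' => f T' - ∑ i ∈ T', ρ i + ∑ i ∈ T \ T', d i)
    rw [Finset.mem_powerset] at hA hB
    have h1 : fhat n f ρ d (S ∪ T) ≤
        f (A ∪ B) - ∑ i ∈ A ∪ B, ρ i + ∑ i ∈ (S ∪ T) \ (A ∪ B), d i :=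
      Finset.inf'_le _ (Finset.mem_powerset.mpr (Finset.union_subset_union hA hB))
    have h2 : fhat n f ρ d (S ∩ T) ≤
        f (A ∩ B) - ∑ i ∈ A ∩ B, ρ i + ∑ i ∈ (S ∩ T) \ (A ∩ B), d i :=
      Finset.inf'_le _ (Finset.mem_powerset.mpr (Finset.inter_subset_inter hA hB))
    have hρ : ∑ i ∈ A ∪ B, ρ i + ∑ i ∈ A ∩ B, ρ i = ∑ i ∈ A, ρ i + ∑ i ∈ B, ρ i := Finset.sum_union_inter
    have hdd := dsum_aux n d hd S T A B
    have hfs := hsub A B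
    have eS : fhat n f ρ d S = f A - ∑ i ∈ A, ρ i + ∑ i ∈ S \ A, d i := hAe
    have eT : fhat n f ρ d T = f B - ∑ i ∈ B, ρ i + ∑ i ∈ T \ B, d i := hBe
    rw [eS, eT]
    linarith
  · ext x
    simp only [Set.mem_setOf_eq]
    constructor
    · rintro ⟨hx0, hxd, hP⟩
      refine ⟨hx0, fun S => Finset.le_inf' _ _ fun T hT => ?_⟩
      rw [Finset.mem_powerset] at hT
      have hs : ∑ i ∈ S \ T, x i + ∑ i ∈ T, x i = ∑ i ∈ S, x i := Finset.sum_sdiff hT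
      have h1 : ∑ i ∈ T, ρ i + ∑ i ∈ T, x i ≤ f T := by
        rw [← Finset.sum_add_distrib]; exact hP T
      have h2 : ∑ i ∈ S \ T, x i ≤ ∑ i ∈ S \ T, d i :=
        Finset.sum_le_sum fun i _ => hxd i
      linarith
    · rintro ⟨hx0, hP⟩
      refine ⟨hx0, fun i => ?_, fun S => ?_⟩
      · have h1 := hP {i}
        have h2 : fhat n f ρ d {i} ≤ f ∅ - ∑ j ∈ (∅ : Finset (Fin n)), ρ j +
            ∑ j ∈ ({i} : Finset (Fin n)) \ ∅, d j :=
          Finset.inf'_le _ (Finset.empty_mem_powerset _)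
        simp [hf0] at h1 h2
        linarith
      · have h1 := hP S
        have h2 : fhat n f ρ d S ≤ f S - ∑ i ∈ S, ρ i + ∑ i ∈ S \ S, d i :=
          Finset.inf'_le _ (Finset.mem_powerset.mpr (subset_refl S))
        rw [Finset.sdiff_self, Finset.sum_empty] at h2
        rw [Finset.sum_add_distrib]
        linarith
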